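/- arXiv:2512.21464 — 3 statements merged into one kernel-verified Lean document; each statement's English description precedes it below -/
import Mathlib

section
/- Let A, B ∈ ℝ^{n×n} be positive semidefinite with A positive definite. Then the matrix S := (√A)⁻¹ · √(√A·B·√A) · (√A)⁻¹ is positive semidefinite, satisfies S·A·Sᵀ = B and trace(A·S) = trace(√(√A·B·√A)), and S is the unique matrix T ∈ ℝ^{n×n} satisfying both T·A·Tᵀ = B and trace(A·T) = trace(√(√A·B·√A)). -/
open Matrix

/-- The positive semidefinite square root of a psd matrix (junk value `0` otherwise). -/
noncomputable def psdSqrt {n : ℕ} (M : Matrix (Fin n) (Fin n) ℝ) : Matrix (Fin n) (Fin n) ℝ :=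
  letI := Classical.propDecidable M.PosSemidef
  if h : M.PosSemidef then
    (h.1.eigenvectorUnitary : Matrix (Fin n) (Fin n) ℝ) *
      diagonal ((↑) ∘ (√·) ∘ h.1.eigenvalues) *
      (star h.1.eigenvectorUnitary : Matrix (Fin n) (Fin n) ℝ)
  else 0

/-- `trace √(√A·B·√A)`. -/
noncomputable def sqrtTr {n : ℕ} (A B : Matrix (Fin n) (Fin n) ℝ) : ℝ :=
  (psdSqrt (psdSqrt A * B * psdSqrt A)).trace

/-- `T` is an optimal transport matrix from `A` to `B`. -/
def IsOT {n : ℕ} (A B T : Matrix (Fin n) (Fin n) ℝ) : Prop :=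
  T * A * Tᵀ = B ∧ (A * T).trace = sqrtTr A B

/-- Squared Bures–Wasserstein distance. -/
noncomputable def W2sq {n : ℕ} (A B : Matrix (Fin n) (Fin n) ℝ) : ℝ :=
  A.trace + B.trace - 2 * sqrtTr A B

lemma conjT_eq {n : ℕ} (M : Matrix (Fin n) (Fin n) ℝ) : Mᴴ = Mᵀ := by
  ext i j; simp [conjTranspose_apply]

lemma key {n : ℕ} {N X : Matrix (Fin n) (Fin n) ℝ} (hN : N.PosSemidef)
    (h1 : X * Xᵀ = N * N) (h2 : X.trace = N.trace) : X = N := by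
  set U : Matrix (Fin n) (Fin n) ℝ := (hN.1.eigenvectorUnitary : Matrix (Fin n) (Fin n) ℝ) with hU
  set lam : Fin n → ℝ := hN.1.eigenvalues with hlam
  have hUU : U * star U = 1 := (Matrix.mem_unitaryGroup_iff).mp hN.1.eigenvectorUnitary.2
  have hUU' : star U * U = 1 := (Matrix.mem_unitaryGroup_iff').mp hN.1.eigenvectorUnitary.2
  have hspec : N = U * diagonal lam * star U := by simpa using hN.1.spectral_theorem
  set Y : Matrix (Fin n) (Fin n) ℝ := star U * X * U with hY
  -- Y * Yᵀ = diagonal lam ^ 2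
  have hYYt : Y * star Y = diagonal (fun i => lam i ^ 2) := by
    have hsY : star Y = star U * Xᵀ * U := by
      rw [hY]
      simp only [Matrix.star_mul, star_star]
      rw [show (star X : Matrix (Fin n) (Fin n) ℝ) = Xᵀ from conjT_eq X]
      noncomm_ring
    have : Y * star Y = star U * (X * Xᵀ) * U := by
      rw [hsY, hY]
      calc star U * X * U * (star U * Xᵀ * U)
          = star U * X * (U * star U) * (Xᵀ * U) := by noncomm_ring
        _ = star U * (X * Xᵀ) * U := by rw [hUU]; noncomm_ring
    rw [this, h1, hspec]
    calc star U * (U * diagonal lam * star U * (U * diagonal lam * star U)) * U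
        = (star U * U) * diagonal lam * (star U * U) * diagonal lam * (star U * U) := by
          noncomm_ring
      _ = diagonal lam * diagonal lam := by rw [hUU']; noncomm_ring
      _ = diagonal (fun i => lam i ^ 2) := by rw [diagonal_mul_diagonal]; ext i; ring
  have htrY : Y.trace = ∑ i, lam i := by
    rw [hY, trace_mul_cycle, hUU, one_mul, h2, hspec,
      trace_mul_cycle, hUU', one_mul, trace_diagonal]
  have hlam0 : ∀ i, 0 ≤ lam i := fun i => hN.eigenvalues_nonneg i
  -- rows: ∑ j, Y i j ^ 2 = lam i ^ 2
  have hrow : ∀ i, ∑ j, Y i j ^ 2 = lam i ^ 2 := by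
    intro i
    have := congrFun (congrFun hYYt i) i
    simpa [mul_apply, conjT_eq, transpose_apply, pow_two] using this
  have hdiag_le : ∀ i, Y i i ≤ lam i := by
    intro i
    have h1' : Y i i ^ 2 ≤ lam i ^ 2 := by
      rw [← hrow i]
      exact Finset.single_le_sum (f := fun j => Y i j ^ 2) (fun j _ => sq_nonneg _) (Finset.mem_univ i)
    nlinarith [hlam0 i, sq_nonneg (Y i i - lam i), sq_nonneg (Y i i + lam i)]
  have hdiag : ∀ i, Y i i = lam i := by
    have hsum : ∑ i, (lam i - Y i i) = 0 := by
      rw [Finset.sum_sub_distrib]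
      have : Y.trace = ∑ i, Y i i := by simp [trace, diag]
      rw [← this, htrY]; ring
    intro i
    have := (Finset.sum_eq_zero_iff_of_nonneg (fun j _ => by
      have := hdiag_le j; linarith)).mp hsum i (Finset.mem_univ i)
    linarith
  have hoff : ∀ i j, i ≠ j → Y i j = 0 := by
    intro i j hij
    have hsum : ∑ j ∈ Finset.univ \ {i}, Y i j ^ 2 = 0 := by
      have := hrow i
      rw [← Finset.sum_sdiff (Finset.subset_univ {i})] at this
      simp only [Finset.sum_singleton, hdiag i] at this
      linarith
    have := (Finset.sum_eq_zero_iff_of_nonneg (fun k _ => sq_nonneg _)).mp hsum j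
      (by simp [Finset.mem_sdiff, Ne.symm hij])
    exact pow_eq_zero_iff (by norm_num) |>.mp this
  have hYD : Y = diagonal lam := by
    ext i j
    by_cases h : i = j
    · subst h; simp [hdiag i]
    · simp [diagonal_apply_ne _ h, hoff i j h]
  -- X = U Y U* = U D U* = N
  have : X = U * Y * star U := by
    rw [hY]
    calc X = (U * star U) * X * (U * star U) := by rw [hUU]; noncomm_ring
      _ = U * (star U * X * U) * star U := by noncomm_ring
  rw [this, hYD, hspec]

noncomputable def Matrix.PosSemidef.sqrt {n : ℕ} {M : Matrix (Fin n) (Fin n) ℝ}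
    (h : M.PosSemidef) : Matrix (Fin n) (Fin n) ℝ :=
    (h.1.eigenvectorUnitary : Matrix (Fin n) (Fin n) ℝ) *
      diagonal ((↑) ∘ (√·) ∘ h.1.eigenvalues) *
      (star h.1.eigenvectorUnitary : Matrix (Fin n) (Fin n) ℝ)

lemma Matrix.PosSemidef.posSemidef_sqrt {n : ℕ} {M : Matrix (Fin n) (Fin n) ℝ}
    (h : M.PosSemidef) : h.sqrt.PosSemidef := by
  unfold Matrix.PosSemidef.sqrt
  have hd : (diagonal ((↑) ∘ (√·) ∘ h.1.eigenvalues : Fin n → ℝ)).PosSemidef :=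
    posSemidef_diagonal_iff.mpr fun i => by simp [Real.sqrt_nonneg]
  exact hd.mul_mul_conjTranspose_same (h.1.eigenvectorUnitary : Matrix (Fin n) (Fin n) ℝ)

lemma Matrix.PosSemidef.sqrt_mul_self {n : ℕ} {M : Matrix (Fin n) (Fin n) ℝ}
    (h : M.PosSemidef) : h.sqrt * h.sqrt = M := by
  unfold Matrix.PosSemidef.sqrt
  set U : Matrix (Fin n) (Fin n) ℝ := (h.1.eigenvectorUnitary : Matrix (Fin n) (Fin n) ℝ) with hU
  set lam : Fin n → ℝ := h.1.eigenvalues with hlam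
  have hUU' : star U * U = 1 := (Matrix.mem_unitaryGroup_iff').mp h.1.eigenvectorUnitary.2
  have hspec : M = U * diagonal lam * star U := by simpa using h.1.spectral_theorem
  set D : Matrix (Fin n) (Fin n) ℝ := diagonal ((↑) ∘ (√·) ∘ lam) with hDdef
  have hD : D * D = diagonal lam := by
    rw [hDdef, diagonal_mul_diagonal]; congr 1; funext i
    simp [Real.mul_self_sqrt (h.eigenvalues_nonneg i), hlam]
  calc U * D * star U * (U * D * star U) = U * D * (star U * U) * D * star U := by noncomm_ring
    _ = U * (D * D) * star U := by rw [hUU']; noncomm_ring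
    _ = M := by rw [hD, ← hspec]

lemma psdSqrt_eq {n : ℕ} {M : Matrix (Fin n) (Fin n) ℝ} (h : M.PosSemidef) :
    psdSqrt M = h.sqrt := by
  unfold psdSqrt
  exact dif_pos h

/-- For psd `A, B` with `A` positive definite, the matrix
`S = (√A)⁻¹ √(√A B √A) (√A)⁻¹` is psd, is a transport matrix from `A` to `B`,
achieves `trace (A·S) = trace √(√A B √A)`, and is the unique such matrix. -/
theorem stmt0 {n : ℕ} (A B : Matrix (Fin n) (Fin n) ℝ)
    (hA : A.PosDef) (hB : B.PosSemidef)
    (S : Matrix (Fin n) (Fin n) ℝ)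
    (hS : S = (psdSqrt A)⁻¹ * psdSqrt (psdSqrt A * B * psdSqrt A) * (psdSqrt A)⁻¹) :
    S.PosSemidef ∧ S * A * Sᵀ = B ∧ (A * S).trace = sqrtTr A B ∧
      ∀ T : Matrix (Fin n) (Fin n) ℝ,
        T * A * Tᵀ = B → (A * T).trace = sqrtTr A B → T = S := by
  have hA' : A.PosSemidef := hA.posSemidef
  set R : Matrix (Fin n) (Fin n) ℝ := psdSqrt A with hRdef
  have hRsq : R = hA'.sqrt := psdSqrt_eq hA'
  have hRpsd : R.PosSemidef := hRsq ▸ hA'.posSemidef_sqrt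
  have hRR : R * R = A := hRsq ▸ hA'.sqrt_mul_self
  have hRsymm : Rᵀ = R := by rw [← conjT_eq]; exact hRpsd.1
  have hdet : IsUnit R.det := by
    have h1 : R.det * R.det = A.det := by rw [← det_mul, hRR]
    have h2 : (0:ℝ) < A.det := hA.det_pos
    refine isUnit_iff_ne_zero.mpr fun h => ?_
    rw [h, mul_zero] at h1; rw [← h1] at h2; exact lt_irrefl _ h2
  have hinv1 : R * R⁻¹ = 1 := mul_nonsing_inv R hdet
  have hinv2 : R⁻¹ * R = 1 := nonsing_inv_mul R hdet
  have hRinvpsd : (R⁻¹).PosSemidef := hRpsd.inv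
  have hRinvsymm : (R⁻¹)ᴴ = R⁻¹ := hRinvpsd.1
  set M : Matrix (Fin n) (Fin n) ℝ := R * B * R with hMdef
  have hMpsd : M.PosSemidef := by
    have := hB.conjTranspose_mul_mul_same R
    rwa [hRpsd.1] at this
  set N : Matrix (Fin n) (Fin n) ℝ := psdSqrt M with hNdef
  have hNsq : N = hMpsd.sqrt := psdSqrt_eq hMpsd
  have hNpsd : N.PosSemidef := hNsq ▸ hMpsd.posSemidef_sqrt
  have hNN : N * N = M := hNsq ▸ hMpsd.sqrt_mul_self
  have hSdef : S = R⁻¹ * N * R⁻¹ := hS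
  have hSpsd : S.PosSemidef := by
    rw [hSdef]
    have := hNpsd.mul_mul_conjTranspose_same R⁻¹
    rwa [hRinvsymm] at this
  have hSsymm : Sᵀ = S := by rw [← conjT_eq]; exact hSpsd.1
  have hsqrtTr : sqrtTr A B = N.trace := rfl
  have htransport : S * A * Sᵀ = B := by
    rw [hSsymm, hSdef, ← hRR]
    calc R⁻¹ * N * R⁻¹ * (R * R) * (R⁻¹ * N * R⁻¹)
        = R⁻¹ * N * ((R⁻¹ * R) * (R * R⁻¹)) * N * R⁻¹ := by noncomm_ring
      _ = R⁻¹ * (N * N) * R⁻¹ := by rw [hinv1, hinv2]; noncomm_ring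
      _ = (R⁻¹ * R) * B * (R * R⁻¹) := by rw [hNN, hMdef]; noncomm_ring
      _ = B := by rw [hinv1, hinv2, one_mul, mul_one]
  have htrace : (A * S).trace = sqrtTr A B := by
    rw [hsqrtTr, hSdef, ← hRR]
    have : R * R * (R⁻¹ * N * R⁻¹) = R * N * R⁻¹ := by
      calc R * R * (R⁻¹ * N * R⁻¹) = R * (R * R⁻¹) * N * R⁻¹ := by noncomm_ring
        _ = R * N * R⁻¹ := by rw [hinv1]; noncomm_ring
    rw [this, trace_mul_cycle, hinv2, one_mul]
  refine ⟨hSpsd, htransport, htrace, fun T hT1 hT2 => ?_⟩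
  set X : Matrix (Fin n) (Fin n) ℝ := R * T * R with hXdef
  have hXXt : X * Xᵀ = N * N := by
    rw [hNN, hMdef, ← hT1, hXdef]
    rw [transpose_mul, transpose_mul, hRsymm]
    calc R * T * R * (R * (Tᵀ * R)) = R * T * (R * R) * Tᵀ * R := by noncomm_ring
      _ = R * (T * (R * R) * Tᵀ) * R := by noncomm_ring
      _ = R * (T * A * Tᵀ) * R := by rw [hRR]
  have hXtr : X.trace = N.trace := by
    rw [hXdef, trace_mul_cycle, hRR, hT2, hsqrtTr]
  have hXN : X = N := key hNpsd hXXt hXtr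
  have : T = R⁻¹ * X * R⁻¹ := by
    rw [hXdef]
    calc T = (R⁻¹ * R) * T * (R * R⁻¹) := by rw [hinv1, hinv2, one_mul, mul_one]
      _ = R⁻¹ * (R * T * R) * R⁻¹ := by noncomm_ring
  rw [this, hXN, hSdef]
end

section
/- Let H be a real separable Hilbert space, let A and B be positive compact operators on H with ker(A) ⊆ ker(B), let √A be the positive square root of A, and let R be the positive square root of the positive compact operator √A ∘ B ∘ √A. Then the following are equivalent: (i) there exists c ≥ 0 such that ⟨R x, x⟩ ≤ c·⟨A x, x⟩ for all x ∈ H; (ii) there exists a positive continuous linear operator T on H with R = √A ∘ T ∘ √A. Moreover, if range(√B) ⊆ range(√A) (where √B is the positive square root of B), then (i) and (ii) hold. -/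
open ContinuousLinearMap
open scoped RealInnerProductSpace

section Aux

variable {H : Type*} [NormedAddCommGroup H] [InnerProductSpace ℝ H] [CompleteSpace H]

/-- Cauchy–Schwarz inequality for the bilinear form of a positive operator. -/
lemma stmt8_aux_cs {T : H →L[ℝ] H} (hT : T.IsPositive) (x y : H) :
    ⟪T x, y⟫ ^ 2 ≤ ⟪T x, x⟫ * ⟪T y, y⟫ := by
  have hsym : ∀ u v : H, ⟪T u, v⟫ = ⟪u, T v⟫ := fun u v => hT.isSelfAdjoint.isSymmetric u v
  have hnn : ∀ z : H, 0 ≤ ⟪T z, z⟫ := by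
    intro z
    have := hT.2 z
    simpa [ContinuousLinearMap.reApplyInnerSelf] using this
  have key : ∀ t : ℝ, 0 ≤ ⟪T y, y⟫ * (t * t) + (2 * ⟪T x, y⟫) * t + ⟪T x, x⟫ := by
    intro t
    have h0 := hnn (x + t • y)
    have hyx : ⟪T y, x⟫ = ⟪T x, y⟫ := by
      rw [hsym y x, real_inner_comm]
    have hexp : ⟪T (x + t • y), x + t • y⟫
        = ⟪T y, y⟫ * (t * t) + (2 * ⟪T x, y⟫) * t + ⟪T x, x⟫ := by
      rw [map_add, map_smul, inner_add_left, inner_add_right, inner_add_right,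
        real_inner_smul_left, real_inner_smul_right, real_inner_smul_left,
        real_inner_smul_right, hyx]
      ring
    linarith [hexp ▸ h0]
  have hd := discrim_le_zero key
  rw [discrim] at hd
  nlinarith [hd]

/-- A nonnegative, bounded, log-convex sequence is decreasing at the first step. -/
lemma stmt8_aux_logconvex (g : ℕ → ℝ) (h0 : ∀ n, 0 ≤ g n)
    (hlc : ∀ n, g (n + 1) ^ 2 ≤ g n * g (n + 2)) (M : ℝ) (hM : ∀ n, g n ≤ M) :
    g 1 ≤ g 0 := by
  by_contra hcon
  push_neg at hcon
  have hg0 : 0 < g 0 := by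
    rcases (h0 0).lt_or_eq with h | h
    · exact h
    · exfalso
      have h1 := hlc 0
      rw [← h] at h1
      have : g 1 ^ 2 ≤ 0 := by simpa using h1
      have : g 1 = 0 := by nlinarith [h0 1]
      rw [this] at hcon
      exact absurd hcon (not_lt.mpr (h0 0))
  set r := g 1 / g 0 with hr_def
  have hr : 1 < r := (one_lt_div hg0).mpr hcon
  have key : ∀ n, 0 < g n ∧ g n * r ≤ g (n + 1) := by
    intro n
    induction n with
    | zero =>
      refine ⟨hg0, ?_⟩
      rw [hr_def, mul_div_cancel₀ _ (ne_of_gt hg0)]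
    | succ n ih =>
      obtain ⟨hpos, hstep⟩ := ih
      have hpos1 : 0 < g (n + 1) := lt_of_lt_of_le (by positivity) hstep
      refine ⟨hpos1, ?_⟩
      have h2 := hlc n
      have h3 : g n * r * g (n + 1) ≤ g (n + 1) * g (n + 1) :=
        mul_le_mul_of_nonneg_right hstep hpos1.le
      have h4 : g n * (g (n + 1) * r) ≤ g n * g (n + 2) := by nlinarith
      have := (mul_le_mul_iff_right₀ hpos).mp h4
      linarith
  have growth : ∀ n, g 0 * r ^ n ≤ g n := by
    intro n
    induction n with
    | zero => simp
    | succ n ih =>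
      have := (key n).2
      calc g 0 * r ^ (n + 1) = g 0 * r ^ n * r := by ring
        _ ≤ g n * r := mul_le_mul_of_nonneg_right ih (by linarith)
        _ ≤ g (n + 1) := (key n).2
  obtain ⟨n, hn⟩ := pow_unbounded_of_one_lt (M / g 0) hr
  have : M < g 0 * r ^ n := by
    rw [div_lt_iff₀ hg0] at hn
    linarith
  linarith [growth n, hM n]

/-- Douglas lemma, range inclusion form (via the closed graph theorem). -/
lemma stmt8_aux_douglas_range (X Y : H →L[ℝ] H) (h : LinearMap.range (X : H →ₗ[ℝ] H) ≤ LinearMap.range (Y : H →ₗ[ℝ] H)) :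
    ∃ C : H →L[ℝ] H, X = Y ∘L C := by
  classical
  set K : Submodule ℝ H := LinearMap.ker (Y : H →ₗ[ℝ] H) with hK
  haveI : CompleteSpace K := (ContinuousLinearMap.isClosed_ker Y).completeSpace_coe
  have hmem : ∀ x : H, X x ∈ LinearMap.range (Y : H →ₗ[ℝ] H) := fun x => h (LinearMap.mem_range_self (X : H →ₗ[ℝ] H) x)
  set z : H → H := fun x => (hmem x).choose with hz_def
  have hz : ∀ x, Y (z x) = X x := fun x => (hmem x).choose_spec
  set Cf : H → H := fun x => z x - (K.orthogonalProjection (z x) : H) with hCf_def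
  have hC1 : ∀ x, Y (Cf x) = X x := by
    intro x
    have hk : ((K.orthogonalProjection (z x) : H)) ∈ K := (K.orthogonalProjection (z x)).2
    have : Y ((K.orthogonalProjection (z x) : H)) = 0 := hk
    simp only [hCf_def, map_sub, this, sub_zero, hz]
  have hC2 : ∀ x, Cf x ∈ Kᗮ := fun x => Submodule.sub_starProjection_mem_orthogonal _
  have huniq : ∀ (x y : H), y ∈ Kᗮ → Y y = X x → y = Cf x := by
    intro x y hy hYy
    have hd : y - Cf x ∈ K := by
      have : Y (y - Cf x) = 0 := by rw [map_sub, hYy, hC1, sub_self]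
      exact this
    have hd' : y - Cf x ∈ Kᗮ := Submodule.sub_mem _ hy (hC2 x)
    have h0 : ⟪y - Cf x, y - Cf x⟫ = 0 := (Submodule.mem_orthogonal K _).mp hd' _ hd
    have := inner_self_eq_zero.mp h0
    rwa [sub_eq_zero] at this
  set Clin : H →ₗ[ℝ] H :=
    { toFun := Cf
      map_add' := fun a b => by
        refine (huniq (a + b) (Cf a + Cf b) (Submodule.add_mem _ (hC2 a) (hC2 b)) ?_).symm
        rw [map_add, hC1, hC1, map_add]
      map_smul' := fun m a => by
        refine (huniq (m • a) (m • Cf a) (Submodule.smul_mem _ m (hC2 a)) ?_).symm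
        rw [map_smul, hC1, map_smul] } with hClin
  have hgraph : IsClosed (Clin.graph : Set (H × H)) := by
    have heq : (Clin.graph : Set (H × H)) = {p : H × H | p.2 ∈ Kᗮ ∧ Y p.2 = X p.1} := by
      ext ⟨a, b⟩
      simp only [SetLike.mem_coe, LinearMap.mem_graph_iff, Set.mem_setOf_eq]
      constructor
      · rintro rfl
        exact ⟨hC2 a, hC1 a⟩
      · rintro ⟨hb, hYb⟩
        exact huniq a b hb hYb
    rw [heq]
    exact IsClosed.inter (K.isClosed_orthogonal.preimage continuous_snd)
      (isClosed_eq (Y.continuous.comp continuous_snd) (X.continuous.comp continuous_fst))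
  refine ⟨ContinuousLinearMap.ofIsClosedGraph hgraph, ?_⟩
  ext x
  have : (ContinuousLinearMap.ofIsClosedGraph hgraph) x = Cf x := rfl
  rw [ContinuousLinearMap.comp_apply, this, hC1]

set_option maxHeartbeats 1000000 in
/-- Extension of a bounded linear map from a submodule to the whole space:
extend by continuity to the closure and by zero on the orthogonal complement. -/
lemma stmt8_aux_extend (S : Submodule ℝ H) (f : S →L[ℝ] H) (c : ℝ) (hc : 0 ≤ c)
    (hf : ∀ u : S, ‖f u‖ ≤ c * ‖u‖) :
    ∃ g : H →L[ℝ] H, ‖g‖ ≤ c ∧ (∀ u : S, g u = f u) ∧ (∀ v ∈ Sᗮ, g v = 0) ∧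
      ∀ v, g v ∈ closure (Set.range f) := by
  classical
  let N : Submodule ℝ H := S.topologicalClosure
  haveI : CompleteSpace N := S.isClosed_topologicalClosure.completeSpace_coe
  let elin : S →ₗ[ℝ] N := Submodule.inclusion S.le_topologicalClosure
  let e : S →L[ℝ] N := elin.mkContinuous 1 (fun u => by
    have : ‖elin u‖ = ‖u‖ := rfl
    rw [this, one_mul])
  have he_coe : ∀ u : S, ((e u : N) : H) = (u : H) := fun u => rfl
  have he_bound : ∀ u : S, ‖u‖ ≤ (1 : NNReal) * ‖e u‖ := by
    intro u
    have : ‖e u‖ = ‖u‖ := rfl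
    rw [this]; simp
  have hdense : DenseRange e := by
    rintro ⟨v, hv⟩
    have hv' : (v : H) ∈ closure (S : Set H) := by
      rw [← Submodule.topologicalClosure_coe]; exact hv
    rw [mem_closure_iff_seq_limit] at hv'
    obtain ⟨u, hu_mem, hu_lim⟩ := hv'
    rw [mem_closure_iff_seq_limit]
    refine ⟨fun n => e ⟨u n, hu_mem n⟩, fun n => ⟨_, rfl⟩, ?_⟩
    rw [tendsto_subtype_rng]
    exact hu_lim
  let g0 : N →L[ℝ] H :=
    f.extend e
  have hge : ∀ u : S, g0 (e u) = f u := fun u =>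
    ContinuousLinearMap.extend_eq f hdense (e.isUniformEmbedding_of_bound he_bound).isUniformInducing u
  have hfnorm : ‖f‖ ≤ c := ContinuousLinearMap.opNorm_le_bound f hc hf
  have hgnorm : ‖g0‖ ≤ c := by
    have := ContinuousLinearMap.opNorm_extend_le f hdense he_bound
    rw [NNReal.coe_one, one_mul] at this
    exact this.trans hfnorm
  refine ⟨g0 ∘L (N.orthogonalProjection), ?_, ?_, ?_, ?_⟩
  · refine ContinuousLinearMap.opNorm_le_bound _ hc fun v => ?_
    rw [ContinuousLinearMap.comp_apply]
    calc ‖g0 (N.orthogonalProjection v)‖ ≤ ‖g0‖ * ‖N.orthogonalProjection v‖ :=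
          g0.le_opNorm _
      _ ≤ c * ‖v‖ := by
          refine mul_le_mul hgnorm ?_ (norm_nonneg _) hc
          exact ((N.orthogonalProjection).le_opNorm v).trans
            (by nlinarith [Submodule.orthogonalProjectionOnto_norm_le N, norm_nonneg v])
  · intro u
    have hmemN : (u : H) ∈ N := S.le_topologicalClosure u.2
    have hproj : N.orthogonalProjection (u : H) = ⟨(u : H), hmemN⟩ :=
      Submodule.orthogonalProjection_mem_subspace_eq_self (⟨(u : H), hmemN⟩ : N)
    have hee : e u = ⟨(u : H), hmemN⟩ := rfl
    rw [ContinuousLinearMap.comp_apply, hproj, ← hee, hge]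
  · intro v hv
    have hvN : v ∈ Nᗮ := by
      rw [show Nᗮ = Sᗮ by
        rw [show N = Sᗮᗮ from (S.orthogonal_orthogonal_eq_closure).symm,
          Submodule.triorthogonal_eq_orthogonal]]
      exact hv
    have : N.orthogonalProjection v = 0 :=
      Submodule.orthogonalProjectionOnto_apply_of_mem_orthogonal hvN
    rw [ContinuousLinearMap.comp_apply, this, map_zero]
  · intro v
    rw [ContinuousLinearMap.comp_apply]
    refine DenseRange.induction_on hdense (N.orthogonalProjection v) ?_ ?_
    · exact (isClosed_closure).preimage g0.continuous
    · intro u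
      rw [hge]
      exact subset_closure ⟨u, rfl⟩

set_option maxHeartbeats 1000000 in
/-- Douglas lemma, norm inequality form. -/
lemma stmt8_aux_douglas_norm (X Y : H →L[ℝ] H) (c : ℝ) (hc : 0 ≤ c)
    (h : ∀ x, ‖X x‖ ≤ c * ‖Y x‖) :
    ∃ Z : H →L[ℝ] H, ‖Z‖ ≤ c ∧ X = Z ∘L Y ∧
      (∀ v ∈ (LinearMap.range (Y : H →ₗ[ℝ] H))ᗮ, Z v = 0) ∧ (∀ v, Z v ∈ closure (Set.range X)) := by
  classical
  have hXeq : ∀ a b : H, Y a = Y b → X a = X b := by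
    intro a b hab
    have h1 : ‖X a - X b‖ ≤ c * ‖Y a - Y b‖ := by
      rw [← map_sub, ← map_sub]; exact h _
    rw [hab, sub_self, norm_zero, mul_zero] at h1
    have : ‖X a - X b‖ = 0 := le_antisymm h1 (norm_nonneg _)
    rwa [norm_eq_zero, sub_eq_zero] at this
  have hwd : ∀ u : LinearMap.range (Y : H →ₗ[ℝ] H), Y u.2.choose = (u : H) := fun u => u.2.choose_spec
  have hXwd : ∀ (u : LinearMap.range (Y : H →ₗ[ℝ] H)) (x : H), Y x = (u : H) → X u.2.choose = X x := by
    intro u x hx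
    exact hXeq _ _ (by rw [hwd, hx])
  let ℓ : (LinearMap.range (Y : H →ₗ[ℝ] H) : Submodule ℝ H) →ₗ[ℝ] H :=
    { toFun := fun u => X u.2.choose
      map_add' := by
        intro u v
        show X (u + v).2.choose = X u.2.choose + X v.2.choose
        rw [hXwd u u.2.choose (hwd u), hXwd v v.2.choose (hwd v),
          hXwd (u + v) (u.2.choose + v.2.choose) (by rw [map_add, hwd u, hwd v]; rfl),
          map_add]
      map_smul' := by
        intro m u
        show X (m • u).2.choose = m • X u.2.choose
        rw [hXwd u u.2.choose (hwd u),
          hXwd (m • u) (m • u.2.choose) (by rw [map_smul, hwd u]; rfl),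
          map_smul] }
  have hℓapp : ∀ (u : LinearMap.range (Y : H →ₗ[ℝ] H)) (x : H), Y x = (u : H) → ℓ u = X x := by
    intro u x hx
    show X u.2.choose = X x
    exact hXwd u x hx
  have hℓY : ∀ x : H, ℓ ⟨Y x, LinearMap.mem_range_self (Y : H →ₗ[ℝ] H) x⟩ = X x := fun x =>
    hℓapp _ x rfl
  have hℓbound : ∀ u : (LinearMap.range (Y : H →ₗ[ℝ] H) : Submodule ℝ H), ‖ℓ u‖ ≤ c * ‖u‖ := by
    rintro ⟨a, ha⟩
    obtain ⟨xa, rfl⟩ := ha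
    rw [hℓapp _ xa rfl]
    exact h xa
  let f : (LinearMap.range (Y : H →ₗ[ℝ] H) : Submodule ℝ H) →L[ℝ] H := ℓ.mkContinuous c hℓbound
  have hfapp : ∀ u, f u = ℓ u := fun u => rfl
  have hfbound : ∀ u, ‖f u‖ ≤ c * ‖u‖ := fun u => hℓbound u
  obtain ⟨g, hg1, hg2, hg3, hg4⟩ := stmt8_aux_extend (LinearMap.range (Y : H →ₗ[ℝ] H)) f c hc hfbound
  refine ⟨g, hg1, ?_, hg3, ?_⟩
  · ext x
    rw [ContinuousLinearMap.comp_apply,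
      hg2 ⟨Y x, LinearMap.mem_range_self (Y : H →ₗ[ℝ] H) x⟩, hfapp, hℓY]
  · intro v
    have := hg4 v
    refine closure_mono ?_ this
    rintro _ ⟨u, rfl⟩
    rw [hfapp]
    obtain ⟨a, ha⟩ := u.2
    rw [hℓapp u a ha]
    exact ⟨a, rfl⟩

end Aux

set_option maxHeartbeats 4000000 in
/-- Let `A, B` be positive compact operators on a real separable Hilbert
space with `ker A ⊆ ker B`, let `√A` be the positive square root of `A`, and let `R` be the
positive square root of `√A ∘ B ∘ √A`. Then the domination `⟨Rx,x⟩ ≤ c·⟨Ax,x⟩` for some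
`c ≥ 0` is equivalent to the existence of a positive continuous operator `T` with
`R = √A ∘ T ∘ √A`; and both hold whenever `range √B ⊆ range √A`. -/
theorem stmt8 {H : Type*} [NormedAddCommGroup H] [InnerProductSpace ℝ H]
    [CompleteSpace H] [TopologicalSpace.SeparableSpace H]
    (A B sqrtA sqrtB R : H →L[ℝ] H)
    (hA : A.IsPositive) (hAc : IsCompactOperator (⇑A))
    (hB : B.IsPositive) (hBc : IsCompactOperator (⇑B))
    (hker : LinearMap.ker (A : H →ₗ[ℝ] H) ≤ LinearMap.ker (B : H →ₗ[ℝ] H))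
    (hsqrtA : sqrtA.IsPositive) (hsqrtA2 : sqrtA ∘L sqrtA = A)
    (hsqrtB : sqrtB.IsPositive) (hsqrtB2 : sqrtB ∘L sqrtB = B)
    (hR : R.IsPositive) (hR2 : R ∘L R = sqrtA ∘L B ∘L sqrtA) :
    ((∃ c : ℝ, 0 ≤ c ∧ ∀ x : H, ⟪R x, x⟫ ≤ c * ⟪A x, x⟫) ↔
        (∃ T : H →L[ℝ] H, T.IsPositive ∧ R = sqrtA ∘L T ∘L sqrtA)) ∧
      (LinearMap.range (sqrtB : H →ₗ[ℝ] H) ≤ LinearMap.range (sqrtA : H →ₗ[ℝ] H) →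
        (∃ c : ℝ, 0 ≤ c ∧ ∀ x : H, ⟪R x, x⟫ ≤ c * ⟪A x, x⟫) ∧
          (∃ T : H →L[ℝ] H, T.IsPositive ∧ R = sqrtA ∘L T ∘L sqrtA)) := by
  have hsAsym : ∀ u v : H, ⟪sqrtA u, v⟫ = ⟪u, sqrtA v⟫ := fun u v =>
    hsqrtA.isSelfAdjoint.isSymmetric u v
  have hsBsym : ∀ u v : H, ⟪sqrtB u, v⟫ = ⟪u, sqrtB v⟫ := fun u v =>
    hsqrtB.isSelfAdjoint.isSymmetric u v
  have hRsym : ∀ u v : H, ⟪R u, v⟫ = ⟪u, R v⟫ := fun u v =>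
    hR.isSelfAdjoint.isSymmetric u v
  have hRpos : ∀ x : H, 0 ≤ ⟪R x, x⟫ := by
    intro x
    have := hR.2 x
    simpa [ContinuousLinearMap.reApplyInnerSelf] using this
  have innerA : ∀ x : H, ⟪A x, x⟫ = ‖sqrtA x‖ ^ 2 := by
    intro x
    have h1 : A x = sqrtA (sqrtA x) := by rw [← hsqrtA2]; rfl
    rw [h1, hsAsym, ← real_inner_self_eq_norm_sq, real_inner_comm]
  have hRnormsq : ∀ x : H, ‖R x‖ ^ 2 = ⟪B (sqrtA x), sqrtA x⟫ := by
    intro x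
    have h1 : R (R x) = sqrtA (B (sqrtA x)) := by
      have := congrFun (congrArg (fun (f : H →L[ℝ] H) => ⇑f) hR2) x
      simpa using this
    rw [← real_inner_self_eq_norm_sq, ← hRsym, h1, hsAsym, real_inner_comm]
  -- unconditional bound `‖R x‖ ≤ √‖B‖ * ‖√A x‖`
  have hRbound : ∀ x : H, ‖R x‖ ≤ Real.sqrt ‖B‖ * ‖sqrtA x‖ := by
    intro x
    have h1 : ‖R x‖ ^ 2 ≤ ‖B‖ * ‖sqrtA x‖ ^ 2 := by
      rw [hRnormsq]
      calc ⟪B (sqrtA x), sqrtA x⟫ ≤ ‖B (sqrtA x)‖ * ‖sqrtA x‖ := real_inner_le_norm _ _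
        _ ≤ ‖B‖ * ‖sqrtA x‖ * ‖sqrtA x‖ :=
            mul_le_mul_of_nonneg_right (B.le_opNorm _) (norm_nonneg _)
        _ = ‖B‖ * ‖sqrtA x‖ ^ 2 := by ring
    calc ‖R x‖ = Real.sqrt (‖R x‖ ^ 2) := (Real.sqrt_sq (norm_nonneg _)).symm
      _ ≤ Real.sqrt (‖B‖ * ‖sqrtA x‖ ^ 2) := Real.sqrt_le_sqrt h1
      _ = Real.sqrt ‖B‖ * ‖sqrtA x‖ := by
          rw [Real.sqrt_mul (norm_nonneg _), Real.sqrt_sq (norm_nonneg _)]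
  -- (ii) → (i)
  have h21 : (∃ T : H →L[ℝ] H, T.IsPositive ∧ R = sqrtA ∘L T ∘L sqrtA) →
      (∃ c : ℝ, 0 ≤ c ∧ ∀ x : H, ⟪R x, x⟫ ≤ c * ⟪A x, x⟫) := by
    rintro ⟨T, hT, hRT⟩
    refine ⟨‖T‖, norm_nonneg _, fun x => ?_⟩
    have h1 : R x = sqrtA (T (sqrtA x)) := by rw [hRT]; rfl
    calc ⟪R x, x⟫ = ⟪T (sqrtA x), sqrtA x⟫ := by
          rw [h1, hsAsym, real_inner_comm, hsAsym, real_inner_comm]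
      _ ≤ ‖T (sqrtA x)‖ * ‖sqrtA x‖ := real_inner_le_norm _ _
      _ ≤ ‖T‖ * ‖sqrtA x‖ * ‖sqrtA x‖ :=
          mul_le_mul_of_nonneg_right (T.le_opNorm _) (norm_nonneg _)
      _ = ‖T‖ * ⟪A x, x⟫ := by rw [innerA]; ring
  -- (i) → (ii)
  have h12 : (∃ c : ℝ, 0 ≤ c ∧ ∀ x : H, ⟪R x, x⟫ ≤ c * ⟪A x, x⟫) →
      (∃ T : H →L[ℝ] H, T.IsPositive ∧ R = sqrtA ∘L T ∘L sqrtA) := by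
    rintro ⟨c, hc0, hc⟩
    obtain ⟨Z, hZn, hZY, hZperp, hZrange⟩ :=
      stmt8_aux_douglas_norm R sqrtA (Real.sqrt ‖B‖) (Real.sqrt_nonneg _) hRbound
    have hZapp : ∀ x, Z (sqrtA x) = R x := by
      intro x
      rw [hZY]; rfl
    have hRZ : ∀ x, R x = sqrtA (ContinuousLinearMap.adjoint Z x) := by
      intro x
      have h1 : R = sqrtA ∘L ContinuousLinearMap.adjoint Z := by
        calc R = ContinuousLinearMap.adjoint R := hR.isSelfAdjoint.adjoint_eq.symm
          _ = ContinuousLinearMap.adjoint (Z ∘L sqrtA) := by rw [← hZY]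
          _ = ContinuousLinearMap.adjoint sqrtA ∘L ContinuousLinearMap.adjoint Z :=
              ContinuousLinearMap.adjoint_comp _ _
          _ = sqrtA ∘L ContinuousLinearMap.adjoint Z := by
              rw [hsqrtA.isSelfAdjoint.adjoint_eq]
      rw [h1]; rfl
    set N : Submodule ℝ H := (LinearMap.range (sqrtA : H →ₗ[ℝ] H)).topologicalClosure with hN
    haveI : CompleteSpace N :=
      (LinearMap.range (sqrtA : H →ₗ[ℝ] H)).isClosed_topologicalClosure.completeSpace_coe
    set P : H →L[ℝ] H := N.subtypeL ∘L N.orthogonalProjection with hP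
    have hPsym : ∀ u v : H, ⟪P u, v⟫ = ⟪u, P v⟫ := fun u v =>
      (isSelfAdjoint_starProjection N).isSymmetric u v
    have hPrange : ∀ u : H, P u ∈ N := fun u => (N.orthogonalProjection u).2
    have hPfix : ∀ u : H, u ∈ N → P u = u := by
      intro u hu
      have : N.orthogonalProjection u = ⟨u, hu⟩ :=
        Submodule.orthogonalProjection_mem_subspace_eq_self (⟨u, hu⟩ : N)
      rw [hP, ContinuousLinearMap.comp_apply, this]; rfl
    have hNperp : Nᗮ = (LinearMap.range (sqrtA : H →ₗ[ℝ] H))ᗮ := by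
      rw [hN, ← Submodule.orthogonal_orthogonal_eq_closure,
        Submodule.triorthogonal_eq_orthogonal]
    have hperp_ker : ∀ w : H, w ∈ (LinearMap.range (sqrtA : H →ₗ[ℝ] H))ᗮ → sqrtA w = 0 := by
      intro w hw
      have h1 : ⟪sqrtA (sqrtA w), w⟫ = 0 :=
        (Submodule.mem_orthogonal _ w).mp hw _ (LinearMap.mem_range_self (sqrtA : H →ₗ[ℝ] H) (sqrtA w))
      have h2 : ⟪sqrtA w, sqrtA w⟫ = 0 := by
        rw [← h1, hsAsym]
        exact real_inner_comm _ _
      exact inner_self_eq_zero.mp h2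
    have hsAP : ∀ u : H, sqrtA (P u) = sqrtA u := by
      intro u
      have h1 : u - P u ∈ Nᗮ := by
        have := Submodule.sub_starProjection_mem_orthogonal (K := N) u
        simpa [hP] using this
      have h2 : sqrtA (u - P u) = 0 := hperp_ker _ (hNperp ▸ h1)
      rw [map_sub, sub_eq_zero] at h2
      exact h2.symm
    set X₂ : H →L[ℝ] H := P ∘L ContinuousLinearMap.adjoint Z with hX₂
    have hX₂inner : ∀ x y : H, ⟪X₂ x, sqrtA y⟫ = ⟪R x, y⟫ := by
      intro x y
      have hmem : sqrtA y ∈ N :=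
        (LinearMap.range (sqrtA : H →ₗ[ℝ] H)).le_topologicalClosure (LinearMap.mem_range_self (sqrtA : H →ₗ[ℝ] H) y)
      calc ⟪X₂ x, sqrtA y⟫ = ⟪ContinuousLinearMap.adjoint Z x, P (sqrtA y)⟫ := hPsym _ _
        _ = ⟪ContinuousLinearMap.adjoint Z x, sqrtA y⟫ := by rw [hPfix _ hmem]
        _ = ⟪x, Z (sqrtA y)⟫ := ContinuousLinearMap.adjoint_inner_left _ _ _
        _ = ⟪x, R y⟫ := by rw [hZapp]
        _ = ⟪R x, y⟫ := (hRsym x y).symm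
    have hX₂bound : ∀ x : H, ‖X₂ x‖ ≤ c * ‖sqrtA x‖ := by
      intro x
      have hwN : X₂ x ∈ N := hPrange _
      have hwb : ∀ y : H, ⟪X₂ x, sqrtA y⟫ ≤ c * ‖sqrtA x‖ * ‖sqrtA y‖ := by
        intro y
        have hcs := stmt8_aux_cs hR x y
        have h1 : ⟪R x, x⟫ ≤ c * ‖sqrtA x‖ ^ 2 := by rw [← innerA]; exact hc x
        have h2 : ⟪R y, y⟫ ≤ c * ‖sqrtA y‖ ^ 2 := by rw [← innerA]; exact hc y
        rw [hX₂inner]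
        nlinarith [hRpos x, hRpos y, sq_nonneg (⟪R x, y⟫ - c * ‖sqrtA x‖ * ‖sqrtA y‖),
          sq_nonneg (⟪R x, y⟫ + c * ‖sqrtA x‖ * ‖sqrtA y‖),
          mul_nonneg (mul_nonneg hc0 (norm_nonneg (sqrtA x))) (norm_nonneg (sqrtA y))]
      have hwle : ‖X₂ x‖ ^ 2 ≤ c * ‖sqrtA x‖ * ‖X₂ x‖ := by
        have hv' : (X₂ x : H) ∈ closure ((LinearMap.range (sqrtA : H →ₗ[ℝ] H) : Submodule ℝ H) : Set H) := by
          rw [← Submodule.topologicalClosure_coe]; exact hwN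
        rw [mem_closure_iff_seq_limit] at hv'
        obtain ⟨u, hu_mem, hu_lim⟩ := hv'
        have lim1 : Filter.Tendsto (fun n => ⟪X₂ x, u n⟫) Filter.atTop (nhds ⟪X₂ x, X₂ x⟫) :=
          Filter.Tendsto.inner tendsto_const_nhds hu_lim
        have lim2 : Filter.Tendsto (fun n => c * ‖sqrtA x‖ * ‖u n‖) Filter.atTop
            (nhds (c * ‖sqrtA x‖ * ‖X₂ x‖)) := (hu_lim.norm).const_mul _
        have hle : ∀ n, ⟪X₂ x, u n⟫ ≤ c * ‖sqrtA x‖ * ‖u n‖ := by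
          intro n
          obtain ⟨y, hy⟩ := hu_mem n
          rw [← hy]
          exact hwb y
        have := le_of_tendsto_of_tendsto' lim1 lim2 hle
        rwa [real_inner_self_eq_norm_sq] at this
      rcases (norm_nonneg (X₂ x)).eq_or_lt with h0 | h0
      · rw [← h0]
        positivity
      · have h1 : ‖X₂ x‖ * ‖X₂ x‖ ≤ (c * ‖sqrtA x‖) * ‖X₂ x‖ := by nlinarith
        exact le_of_mul_le_mul_right h1 h0
    obtain ⟨T₀, hT₀n, hT₀eq, hT₀perp, hT₀range⟩ :=
      stmt8_aux_douglas_norm X₂ sqrtA c hc0 hX₂bound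
    have hT₀app : ∀ x, T₀ (sqrtA x) = X₂ x := by
      intro x
      rw [hT₀eq]; rfl
    have hT₀N : ∀ v : H, T₀ v ∈ N := by
      intro v
      have hsub : closure (Set.range ⇑X₂) ⊆ (N : Set H) := by
        refine closure_minimal ?_ (LinearMap.range (sqrtA : H →ₗ[ℝ] H)).isClosed_topologicalClosure
        rintro _ ⟨u, rfl⟩
        exact hPrange _
      exact hsub (hT₀range v)
    have hSAT : sqrtA ∘L T₀ ∘L sqrtA = R := by
      ext x
      show sqrtA (T₀ (sqrtA x)) = R x
      rw [hT₀app, hX₂, ContinuousLinearMap.comp_apply, hsAP, ← hRZ]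
    have hT₀P : ∀ u : H, T₀ u = T₀ (P u) := by
      intro u
      have hu1 : u - P u ∈ Nᗮ := by
        have := Submodule.sub_starProjection_mem_orthogonal (K := N) u
        simpa [hP] using this
      have h1 : T₀ (u - P u) = 0 := hT₀perp _ (hNperp ▸ hu1)
      have h3 : T₀ u - T₀ (P u) = 0 := by rw [← map_sub, h1]
      exact sub_eq_zero.mp h3
    have hT₀reduce : ∀ u w : H, ⟪T₀ u, w⟫ = ⟪T₀ (P u), P w⟫ := by
      intro u w
      have hw1 : w - P w ∈ Nᗮ := by
        have := Submodule.sub_starProjection_mem_orthogonal (K := N) w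
        simpa [hP] using this
      have h4 : ⟪T₀ (P u), w - P w⟫ = 0 :=
        (Submodule.mem_orthogonal N (w - P w)).mp hw1 (T₀ (P u)) (hT₀N _)
      have h6 := inner_sub_right (𝕜 := ℝ) (T₀ (P u)) w (P w)
      rw [h4] at h6
      rw [hT₀P u]
      linarith [h6]
    have hbase : ∀ x y : H, ⟪T₀ (sqrtA x), sqrtA y⟫ = ⟪sqrtA x, T₀ (sqrtA y)⟫ := by
      intro x y
      calc ⟪T₀ (sqrtA x), sqrtA y⟫ = ⟪X₂ x, sqrtA y⟫ := by rw [hT₀app]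
        _ = ⟪R x, y⟫ := hX₂inner x y
        _ = ⟪x, R y⟫ := hRsym x y
        _ = ⟪R y, x⟫ := real_inner_comm _ _
        _ = ⟪X₂ y, sqrtA x⟫ := (hX₂inner y x).symm
        _ = ⟪sqrtA x, X₂ y⟫ := real_inner_comm _ _
        _ = ⟪sqrtA x, T₀ (sqrtA y)⟫ := by rw [hT₀app]
    have hstep1 : ∀ v : H, v ∈ N → ∀ y : H, ⟪T₀ v, sqrtA y⟫ = ⟪v, T₀ (sqrtA y)⟫ := by
      intro v hv y
      have hclosed : IsClosed {w : H | ⟪T₀ w, sqrtA y⟫ = ⟪w, T₀ (sqrtA y)⟫} :=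
        isClosed_eq ((T₀.continuous).inner continuous_const)
          (continuous_id.inner continuous_const)
      have hsub : ((LinearMap.range (sqrtA : H →ₗ[ℝ] H) : Submodule ℝ H) : Set H) ⊆
          {w : H | ⟪T₀ w, sqrtA y⟫ = ⟪w, T₀ (sqrtA y)⟫} := by
        rintro _ ⟨x, rfl⟩
        exact hbase x y
      have hv' : v ∈ closure ((LinearMap.range (sqrtA : H →ₗ[ℝ] H) : Submodule ℝ H) : Set H) := by
        rw [← Submodule.topologicalClosure_coe]; exact hv
      exact closure_minimal hsub hclosed hv'
    have hstep2 : ∀ v : H, v ∈ N → ∀ w : H, w ∈ N → ⟪T₀ v, w⟫ = ⟪v, T₀ w⟫ := by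
      intro v hv w hw
      have hclosed : IsClosed {u : H | ⟪T₀ v, u⟫ = ⟪v, T₀ u⟫} :=
        isClosed_eq (continuous_const.inner continuous_id)
          (continuous_const.inner T₀.continuous)
      have hsub : ((LinearMap.range (sqrtA : H →ₗ[ℝ] H) : Submodule ℝ H) : Set H) ⊆
          {u : H | ⟪T₀ v, u⟫ = ⟪v, T₀ u⟫} := by
        rintro _ ⟨y, rfl⟩
        exact hstep1 v hv y
      have hw' : w ∈ closure ((LinearMap.range (sqrtA : H →ₗ[ℝ] H) : Submodule ℝ H) : Set H) := by
        rw [← Submodule.topologicalClosure_coe]; exact hw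
      exact closure_minimal hsub hclosed hw'
    have hT₀sym : ∀ u v : H, ⟪T₀ u, v⟫ = ⟪u, T₀ v⟫ := by
      intro u v
      calc ⟪T₀ u, v⟫ = ⟪T₀ (P u), P v⟫ := hT₀reduce u v
        _ = ⟪P u, T₀ (P v)⟫ := hstep2 _ (hPrange u) _ (hPrange v)
        _ = ⟪T₀ (P v), P u⟫ := real_inner_comm _ _
        _ = ⟪T₀ v, u⟫ := (hT₀reduce v u).symm
        _ = ⟪u, T₀ v⟫ := real_inner_comm _ _
    have hposN : ∀ v : H, v ∈ N → 0 ≤ ⟪T₀ v, v⟫ := by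
      intro v hv
      have hclosed : IsClosed {w : H | 0 ≤ ⟪T₀ w, w⟫} :=
        isClosed_le continuous_const ((T₀.continuous).inner continuous_id)
      have hsub : ((LinearMap.range (sqrtA : H →ₗ[ℝ] H) : Submodule ℝ H) : Set H) ⊆
          {w : H | 0 ≤ ⟪T₀ w, w⟫} := by
        rintro _ ⟨y, rfl⟩
        show 0 ≤ ⟪T₀ (sqrtA y), sqrtA y⟫
        rw [hT₀app]
        have := hX₂inner y y
        rw [this]
        exact hRpos y
      have hv' : v ∈ closure ((LinearMap.range (sqrtA : H →ₗ[ℝ] H) : Submodule ℝ H) : Set H) := by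
        rw [← Submodule.topologicalClosure_coe]; exact hv
      exact closure_minimal hsub hclosed hv'
    have hT₀pos : ∀ u : H, 0 ≤ ⟪T₀ u, u⟫ := by
      intro u
      rw [hT₀reduce u u]
      exact hposN _ (hPrange u)
    refine ⟨T₀, ⟨?_, fun u => ?_⟩, hSAT.symm⟩
    · exact fun u v => hT₀sym u v
    · have h3 : T₀.reApplyInnerSelf u = ⟪T₀ u, u⟫ := by
        simp [ContinuousLinearMap.reApplyInnerSelf]
      rw [h3]
      exact hT₀pos u
  refine ⟨⟨h12, h21⟩, ?_⟩
  -- the range inclusion implies (i) (and hence (ii))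
  intro hrange
  suffices hi : ∃ c : ℝ, 0 ≤ c ∧ ∀ x : H, ⟪R x, x⟫ ≤ c * ⟪A x, x⟫ by
    exact ⟨hi, h12 hi⟩
  obtain ⟨C, hC⟩ := stmt8_aux_douglas_range sqrtB sqrtA hrange
  have hCadj : sqrtB = ContinuousLinearMap.adjoint C ∘L sqrtA := by
    calc sqrtB = ContinuousLinearMap.adjoint sqrtB := hsqrtB.isSelfAdjoint.adjoint_eq.symm
      _ = ContinuousLinearMap.adjoint (sqrtA ∘L C) := by rw [← hC]
      _ = ContinuousLinearMap.adjoint C ∘L ContinuousLinearMap.adjoint sqrtA :=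
          ContinuousLinearMap.adjoint_comp _ _
      _ = ContinuousLinearMap.adjoint C ∘L sqrtA := by rw [hsqrtA.isSelfAdjoint.adjoint_eq]
  set κ : ℝ := ‖ContinuousLinearMap.adjoint C‖ + 1 with hκ
  have hκpos : 0 < κ := by positivity
  have hRA : ∀ x : H, ‖R x‖ ≤ 1 * ‖(κ • A) x‖ := by
    intro x
    have h1 : sqrtB (sqrtA x) = ContinuousLinearMap.adjoint C (A x) := by
      rw [hCadj]
      show ContinuousLinearMap.adjoint C (sqrtA (sqrtA x)) = _
      rw [show sqrtA (sqrtA x) = A x from by rw [← hsqrtA2]; rfl]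
    have h2 : ‖R x‖ ^ 2 = ‖sqrtB (sqrtA x)‖ ^ 2 := by
      rw [hRnormsq]
      have h3 : B (sqrtA x) = sqrtB (sqrtB (sqrtA x)) := by rw [← hsqrtB2]; rfl
      rw [h3, hsBsym, ← real_inner_self_eq_norm_sq, real_inner_comm]
    have h4 : ‖R x‖ = ‖sqrtB (sqrtA x)‖ := by
      have := congrArg Real.sqrt h2
      rwa [Real.sqrt_sq (norm_nonneg _), Real.sqrt_sq (norm_nonneg _)] at this
    have h5 : ‖(κ • A) x‖ = κ * ‖A x‖ := by
      rw [ContinuousLinearMap.smul_apply, norm_smul, Real.norm_eq_abs, abs_of_pos hκpos]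
    rw [h4, h1, one_mul, h5]
    calc ‖ContinuousLinearMap.adjoint C (A x)‖
        ≤ ‖ContinuousLinearMap.adjoint C‖ * ‖A x‖ := ContinuousLinearMap.le_opNorm _ _
      _ ≤ κ * ‖A x‖ := by
          refine mul_le_mul_of_nonneg_right ?_ (norm_nonneg _)
          rw [hκ]; linarith
  obtain ⟨W, hWn, hWeq, -, -⟩ := stmt8_aux_douglas_norm R (κ • A) 1 one_pos.le hRA
  set A' : H →L[ℝ] H := κ • A with hA'
  have hA'sa : IsSelfAdjoint A' := by
    rw [ContinuousLinearMap.isSelfAdjoint_iff']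
    have h1 := ContinuousLinearMap.adjoint.map_smulₛₗ κ A
    rw [hA', h1]
    simp only [starRingEnd_apply, star_trivial]
    rw [ContinuousLinearMap.isSelfAdjoint_iff'.mp hA.isSelfAdjoint]
  have hRW : ∀ x, R x = W (A' x) := by
    intro x
    rw [hWeq]; rfl
  have hRW' : ∀ x, R x = A' (ContinuousLinearMap.adjoint W x) := by
    intro x
    have h1 : R = A' ∘L ContinuousLinearMap.adjoint W := by
      calc R = ContinuousLinearMap.adjoint R := hR.isSelfAdjoint.adjoint_eq.symm
        _ = ContinuousLinearMap.adjoint (W ∘L A') := by rw [← hWeq]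
        _ = ContinuousLinearMap.adjoint A' ∘L ContinuousLinearMap.adjoint W :=
            ContinuousLinearMap.adjoint_comp _ _
        _ = A' ∘L ContinuousLinearMap.adjoint W := by rw [hA'sa.adjoint_eq]
    rw [h1]; rfl
  set s : H →L[ℝ] H := Real.sqrt κ • sqrtA with hs
  have hsapp : ∀ u : H, s u = Real.sqrt κ • sqrtA u := fun u => rfl
  have hss : ∀ u v : H, ⟪A' u, v⟫ = ⟪s u, s v⟫ := by
    intro u v
    have h1 : A' u = κ • (A u) := rfl
    have h2 : ⟪A u, v⟫ = ⟪sqrtA u, sqrtA v⟫ := by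
      rw [show A u = sqrtA (sqrtA u) from by rw [← hsqrtA2]; rfl, hsAsym]
    have h3 : Real.sqrt κ ^ 2 = ‖ContinuousLinearMap.adjoint C‖ + 1 := by
      rw [Real.sq_sqrt hκpos.le, hκ]
    rw [h1, hsapp, hsapp, real_inner_smul_left, real_inner_smul_right, real_inner_smul_left, h2]
    linear_combination (-⟪sqrtA u, sqrtA v⟫) * h3
  have hWadj_norm : ∀ u : H, ‖ContinuousLinearMap.adjoint W u‖ ≤ ‖u‖ := by
    intro u
    calc ‖ContinuousLinearMap.adjoint W u‖
        ≤ ‖ContinuousLinearMap.adjoint W‖ * ‖u‖ := ContinuousLinearMap.le_opNorm _ _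
      _ ≤ 1 * ‖u‖ := by
          refine mul_le_mul_of_nonneg_right ?_ (norm_nonneg _)
          rw [LinearIsometryEquiv.norm_map ContinuousLinearMap.adjoint W]
          exact hWn
      _ = ‖u‖ := one_mul _
  refine ⟨κ, hκpos.le, fun x => ?_⟩
  set v : ℕ → H := fun n => (⇑(ContinuousLinearMap.adjoint W))^[n] x with hv
  have hv0 : v 0 = x := rfl
  have hvsucc : ∀ n, v (n + 1) = ContinuousLinearMap.adjoint W (v n) := by
    intro n
    rw [hv]
    exact Function.iterate_succ_apply' _ _ _
  set g : ℕ → ℝ := fun n => ‖s (v n)‖ with hgdef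
  have hvle : ∀ n, ‖v n‖ ≤ ‖x‖ := by
    intro n
    induction n with
    | zero => rw [hv0]
    | succ n ih =>
      rw [hvsucc]
      exact (hWadj_norm _).trans ih
  have hgM : ∀ n, g n ≤ ‖s‖ * ‖x‖ := by
    intro n
    calc g n ≤ ‖s‖ * ‖v n‖ := ContinuousLinearMap.le_opNorm _ _
      _ ≤ ‖s‖ * ‖x‖ := mul_le_mul_of_nonneg_left (hvle n) (norm_nonneg _)
  have hlc : ∀ n, g (n + 1) ^ 2 ≤ g n * g (n + 2) := by
    intro n
    have h1 : g (n + 1) ^ 2 = ⟪A' (v (n + 1)), v (n + 1)⟫ := by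
      rw [hss, real_inner_self_eq_norm_sq]
    have h2 : A' (v (n + 1)) = W (A' (v n)) := by
      rw [hvsucc n, ← hRW', hRW]
    have h3 : ⟪A' (v (n + 1)), v (n + 1)⟫ = ⟪A' (v n), v (n + 2)⟫ := by
      rw [h2, ← ContinuousLinearMap.adjoint_inner_right, ← hvsucc (n + 1)]
    have h4 : ⟪A' (v n), v (n + 2)⟫ = ⟪s (v n), s (v (n + 2))⟫ := hss _ _
    calc g (n + 1) ^ 2 = ⟪s (v n), s (v (n + 2))⟫ := by rw [h1, h3, h4]
      _ ≤ ‖s (v n)‖ * ‖s (v (n + 2))‖ := real_inner_le_norm _ _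
      _ = g n * g (n + 2) := rfl
  have hg10 : g 1 ≤ g 0 :=
    stmt8_aux_logconvex g (fun n => norm_nonneg _) hlc (‖s‖ * ‖x‖) hgM
  have hfinal : ⟪R x, x⟫ ≤ κ * ⟪A x, x⟫ := by
    have h1 : ⟪R x, x⟫ = ⟪s (v 1), s (v 0)⟫ := by
      rw [hRW' x, hss]
      have : v 1 = ContinuousLinearMap.adjoint W x := by rw [hvsucc 0, hv0]
      rw [this, hv0]
    have h2 : ⟪R x, x⟫ ≤ g 1 * g 0 := by
      rw [h1]
      exact real_inner_le_norm _ _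
    have hg0x : g 0 = ‖s x‖ := by
      show ‖s (v 0)‖ = ‖s x‖
      rw [hv0]
    have h3 : g 0 * g 0 = ⟪A' x, x⟫ := by
      rw [hss, real_inner_self_eq_norm_sq, hg0x]
      ring
    have h4 : ⟪A' x, x⟫ = κ * ⟪A x, x⟫ := by
      rw [show A' x = κ • (A x) from rfl, real_inner_smul_left]
    nlinarith [norm_nonneg (s (v 0)), norm_nonneg (s (v 1))]
  exact hfinal
end

section
/- Let μ be a centered Gaussian measure on a real separable Hilbert space H with covariance operator A. If D is a linear subspace of H with D ⊆ closure(range A) such that μ-almost every x ∈ H belongs to D, then the closure of D equals closure(range A); that is, D is dense in the closure of the range of A. -/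
open MeasureTheory ProbabilityTheory
open scoped RealInnerProductSpace NNReal

/-- If `μ` is a centered Gaussian measure on a real separable Hilbert
space `H` with covariance operator `A`, and `D ⊆ closure (range A)` is a linear subspace
of full `μ`-measure, then `D` is dense in the closure of the range of `A`. -/
theorem stmt18 {H : Type*} [NormedAddCommGroup H] [InnerProductSpace ℝ H]
    [CompleteSpace H] [TopologicalSpace.SeparableSpace H]
    [MeasurableSpace H] [BorelSpace H]
    (μ : Measure H) [IsProbabilityMeasure μ]
    (hgauss : ∀ L : H →L[ℝ] ℝ, ∃ (m : ℝ) (v : ℝ≥0), μ.map L = gaussianReal m v)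
    (hcent : ∫ x, x ∂μ = 0)
    (A : H →L[ℝ] H)
    (hApos : A.IsPositive) (hAc : IsCompactOperator (⇑A))
    (hcov : ∀ h g : H, ⟪A h, g⟫ = ∫ x, ⟪h, x⟫ * ⟪g, x⟫ ∂μ)
    (D : Submodule ℝ H)
    (hDsub : (D : Set H) ⊆ closure (LinearMap.range (A : H →ₗ[ℝ] H) : Set H))
    (hae : ∀ᵐ x ∂μ, x ∈ D) :
    closure (D : Set H) = closure (LinearMap.range (A : H →ₗ[ℝ] H) : Set H) := by
  refine subset_antisymm (closure_minimal hDsub isClosed_closure) ?_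
  refine closure_minimal ?_ isClosed_closure
  rintro _ ⟨h, rfl⟩
  have hmem : A h ∈ Dᗮᗮ := by
    intro y hy
    have hzero : (fun x => ⟪h, x⟫ * ⟪y, x⟫) =ᵐ[μ] 0 := by
      filter_upwards [hae] with x hx
      have : ⟪y, x⟫ = 0 := by
        rw [real_inner_comm]; exact hy x hx
      simp [this]
    have hint : ⟪A h, y⟫ = 0 := by
      rw [hcov h y, integral_congr_ae hzero]; simp
    rw [real_inner_comm] at hint
    exact hint
  rw [Submodule.orthogonal_orthogonal_eq_closure] at hmem
  exact hmem
end
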